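/- Let G₆ be the subgroup of G₇ generated by s and u. Then {1, z, z²} is a left transversal of G₆ in G₇, i.e. G₇ = G₆ ∪ z·G₆ ∪ z²·G₆ with the three cosets pairwise disjoint; consequently, with Z₇ = {1, z, …, z¹¹}, U = {1, u, u²}, and X₇ = {1, s, s·u, s·u·s}, the map Z₇ × U × X₇ → G₇ sending (y, v, x) to y·v·x is a bijection. -/

import Mathlib

open Pointwise

namespace Tetra

def rels : Set (FreeGroup (Fin 3)) :=
  { FreeGroup.of 0 ^ 2, FreeGroup.of 1 ^ 3, FreeGroup.of 2 ^ 3,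
    FreeGroup.of 0 * FreeGroup.of 1 * FreeGroup.of 2 *
      (FreeGroup.of 1 * FreeGroup.of 2 * FreeGroup.of 0)⁻¹,
    FreeGroup.of 0 * FreeGroup.of 1 * FreeGroup.of 2 *
      (FreeGroup.of 2 * FreeGroup.of 0 * FreeGroup.of 1)⁻¹ }

/-- The group `G₇ = ⟨s, t, u | s² = t³ = u³ = 1, stu = tus = ust⟩`. -/
abbrev G7 := PresentedGroup rels

def s : G7 := PresentedGroup.of 0
def t : G7 := PresentedGroup.of 1
def u : G7 := PresentedGroup.of 2
def z : G7 := s * t * u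

def G6 : Subgroup G7 := Subgroup.closure {s, u}

lemma relmk {r : FreeGroup (Fin 3)} (h : r ∈ rels) : PresentedGroup.mk rels r = 1 :=
  (QuotientGroup.eq_one_iff r).mpr (Subgroup.subset_normalClosure h)

lemma hs : s * s = 1 := by
  have h := relmk (show (FreeGroup.of 0 ^ 2 : FreeGroup (Fin 3)) ∈ rels by simp [rels])
  rwa [pow_two, map_mul] at h

lemma ht : t * (t * t) = 1 := by
  have h := relmk (show (FreeGroup.of 1 ^ 3 : FreeGroup (Fin 3)) ∈ rels by simp [rels])
  rwa [pow_succ, pow_two, map_mul, map_mul, mul_assoc] at h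

lemma hu : u * (u * u) = 1 := by
  have h := relmk (show (FreeGroup.of 2 ^ 3 : FreeGroup (Fin 3)) ∈ rels by simp [rels])
  rwa [pow_succ, pow_two, map_mul, map_mul, mul_assoc] at h

lemma h1 : s * t * u = t * u * s := by
  have h := relmk (show (FreeGroup.of 0 * FreeGroup.of 1 * FreeGroup.of 2 *
      (FreeGroup.of 1 * FreeGroup.of 2 * FreeGroup.of 0)⁻¹ : FreeGroup (Fin 3)) ∈ rels by simp [rels])
  rw [map_mul, map_inv, map_mul, map_mul, map_mul, map_mul] at h
  exact mul_inv_eq_one.mp h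

lemma h2 : s * t * u = u * s * t := by
  have h := relmk (show (FreeGroup.of 0 * FreeGroup.of 1 * FreeGroup.of 2 *
      (FreeGroup.of 2 * FreeGroup.of 0 * FreeGroup.of 1)⁻¹ : FreeGroup (Fin 3)) ∈ rels by simp [rels])
  rw [map_mul, map_inv, map_mul, map_mul, map_mul, map_mul] at h
  exact mul_inv_eq_one.mp h


lemma hzs : z * s = s * z := by
  have e1 : z * s = t * u := by
    rw [z, h1, mul_assoc, mul_assoc, hs, mul_one]
  have e2 : s * z = t * u := by
    rw [z, ← mul_assoc, ← mul_assoc, hs, one_mul]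
  rw [e1, e2]

lemma hzu : z * u = u * z := by
  show (s * t * u) * u = u * (s * t * u)
  conv_lhs => rw [h2]
  group


lemma hzt : z * t = t * z := by
  have : z * t = t * (u * s * t) := by rw [z, h1]; group
  rw [this, ← h2, ← z]

lemma hzc : ∀ g : G7, g * z = z * g := by
  intro g
  have : g ∈ Subgroup.centralizer {z} := by
    apply PresentedGroup.generated_by
    intro j
    rw [Subgroup.mem_centralizer_iff]
    intro h hh
    simp only [Set.mem_singleton_iff] at hh
    subst hh
    fin_cases j
    · exact hzs
    · exact hzt
    · exact hzu
  exact (this z (Set.mem_singleton z)).symm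



lemma hzc' : ∀ a b : G7, a * (z * b) = z * (a * b) := by
  intro a b; rw [← mul_assoc, hzc a, mul_assoc]

lemma hs2 (g : G7) : s * (s * g) = g := by
  calc s * (s * g) = (s*s) * g := by group
  _ = g := by rw [hs, one_mul]

lemma hu2 (g : G7) : u * (u * (u * g)) = g := by
  calc u * (u * (u * g)) = (u*(u*u)) * g := by group
  _ = g := by rw [hu, one_mul]

lemma htw : t = s * (z * (u * u)) := by
  have aux : s * ((s * t * u) * (u * u)) = t := by
    calc s * ((s * t * u) * (u * u)) = (s * s) * (t * (u * (u * u))) := by group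
    _ = t := by rw [hs, hu, one_mul, mul_one]
  rw [z]; exact aux.symm

lemma key1 : (z * (z * z)) * (s * (u * (u * (s * (u * (u * (s * (u * u)))))))) = 1 := by
  have h := ht
  rw [htw] at h
  calc (z * (z * z)) * (s * (u * (u * (s * (u * (u * (s * (u * u))))))))
      = (s * (z * (u * u))) * ((s * (z * (u * u))) * (s * (z * (u * u)))) := by
        simp only [hzc', mul_assoc]
  _ = 1 := h

lemma canc1 : (u * (s * (u * (s * (u * s))))) * (s * (u * (u * (s * (u * (u * (s * (u * u)))))))) = 1 := by
  calc (u * (s * (u * (s * (u * s))))) * (s * (u * (u * (s * (u * (u * (s * (u * u))))))))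
      = u * (s * (u * (s * (u * (s * (s * (u * (u * (s * (u * (u * (s * (u * u))))))))))))) := by group
  _ = u * (s * (u * (s * (u * (u * (u * (s * (u * (u * (s * (u * u))))))))))) := by rw [hs2]
  _ = u * (s * (u * (s * (s * (u * (u * (s * (u * u)))))))) := by rw [hu2]
  _ = u * (s * (u * (u * (u * (s * (u * u)))))) := by rw [hs2]
  _ = u * (s * (s * (u * u))) := by rw [hu2]
  _ = u * (u * u) := by rw [hs2]
  _ = 1 := hu

lemma hz3 : z * (z * z) = u * (s * (u * (s * (u * s)))) :=
  mul_right_cancel (key1.trans canc1.symm)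

lemma e3 (b : G7) : z^3 * b = z * (z * (z * b)) := by
  rw [pow_succ, pow_two, mul_assoc, mul_assoc]

lemma hz3c (a b : G7) : a * (z^3 * b) = z^3 * (a * b) := by
  rw [e3, e3]; simp only [hzc']

lemma hcw (g : G7) : z^3 * g = u * (s * (u * (s * (u * (s * g))))) := by
  rw [e3]
  have : z * (z * (z * g)) = (z * (z * z)) * g := by group
  rw [this, hz3]
  group

lemma A2 (g : G7) : u * (s * (u * (s * (u * (s * g))))) = s * (u * (s * (u * (s * (u * g))))) := by
  calc u * (s * (u * (s * (u * (s * g))))) = z^3 * g := (hcw g).symm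
  _ = s * (s * (z^3 * g)) := (hs2 _).symm
  _ = s * (z^3 * (s * g)) := by rw [hz3c s g]
  _ = s * (u * (s * (u * (s * (u * (s * (s * g))))))) := by rw [hcw (s*g)]
  _ = s * (u * (s * (u * (s * (u * g))))) := by rw [hs2]

lemma A3 (g : G7) : u * (u * (s * (u * (s * (u * (s * g)))))) = u * (s * (u * (s * (u * (s * (u * g)))))) := by
  rw [← hcw g, ← hcw (u*g), hz3c u g]
lemma r4 (g : G7) : s * (u * (s * (u * (s * (u * (u * (s * (u * (s * (g)))))))))) = u * (s * (u * (u * (s * (u * (s * (u * (g)))))))) := by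
  have hA : u * (s * (u * (s * (u * (s * (u * (s * (u * (s * (g)))))))))) = s * (u * (s * (u * (s * (u * (u * (s * (u * (s * (g)))))))))) := by rw [A2 (u * (s * (u * (s * (g)))))]
  have hB : u * (s * (u * (s * (u * (s * (u * (s * (u * (s * (g)))))))))) = u * (s * (u * (u * (s * (u * (s * (u * (g)))))))) := by rw [A2 (g), hs2 (u * (s * (u * (s * (u * (g))))))]
  exact hA.symm.trans hB

lemma r5 (g : G7) : s * (u * (s * (u * (s * (u * (u * (s * (g)))))))) = u * (u * (s * (u * (s * (u * (g)))))) := by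
  have hA : u * (s * (u * (s * (u * (s * (u * (s * (g)))))))) = s * (u * (s * (u * (s * (u * (u * (s * (g)))))))) := by rw [A2 (u * (s * (g)))]
  have hB : u * (s * (u * (s * (u * (s * (u * (s * (g)))))))) = u * (u * (s * (u * (s * (u * (g)))))) := by rw [A2 (g), hs2 (u * (s * (u * (s * (u * (g))))))]
  exact hA.symm.trans hB

lemma r6 (g : G7) : u * (u * (s * (u * (u * (s * (u * (s * (u * (g))))))))) = s * (u * (s * (u * (u * (s * (g)))))) := by
  have hA : u * (u * (s * (u * (s * (u * (s * (u * (s * (u * (s * (g))))))))))) = u * (u * (s * (u * (u * (s * (u * (s * (u * (g))))))))) := by rw [A2 (g), hs2 (u * (s * (u * (s * (u * (g))))))]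
  have hB : u * (u * (s * (u * (s * (u * (s * (u * (s * (u * (s * (g))))))))))) = s * (u * (s * (u * (u * (s * (g)))))) := by rw [A3 (u * (s * (u * (s * (g))))), A2 (u * (u * (s * (u * (s * (g)))))), hu2 (s * (u * (s * (g)))), hs2 (u * (s * (g)))]
  exact hA.symm.trans hB

lemma r7 (g : G7) : u * (s * (u * (s * (u * (u * (s * (u * (s * (g))))))))) = s * (u * (s * (u * (u * (s * (u * (s * (u * (g))))))))) := by
  have hA : s * (s * (u * (s * (u * (s * (u * (u * (s * (u * (s * (g))))))))))) = u * (s * (u * (s * (u * (u * (s * (u * (s * (g))))))))) := by rw [hs2 (u * (s * (u * (s * (u * (u * (s * (u * (s * (g))))))))))]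
  have hB : s * (s * (u * (s * (u * (s * (u * (u * (s * (u * (s * (g))))))))))) = s * (u * (s * (u * (u * (s * (u * (s * (u * (g))))))))) := by rw [r4 (g)]
  exact hA.symm.trans hB

lemma r8 (g : G7) : u * (s * (u * (s * (u * (u * (s * (g))))))) = s * (u * (u * (s * (u * (s * (u * (g))))))) := by
  have hA : s * (s * (u * (s * (u * (s * (u * (u * (s * (g))))))))) = u * (s * (u * (s * (u * (u * (s * (g))))))) := by rw [hs2 (u * (s * (u * (s * (u * (u * (s * (g))))))))]
  have hB : s * (s * (u * (s * (u * (s * (u * (u * (s * (g))))))))) = s * (u * (u * (s * (u * (s * (u * (g))))))) := by rw [r5 (g)]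
  exact hA.symm.trans hB

lemma r9 (g : G7) : u * (s * (u * (u * (s * (u * (u * (s * (g)))))))) = s * (u * (u * (s * (u * (u * (s * (u * (g)))))))) := by
  have hA : u * (s * (u * (s * (u * (s * (u * (s * (u * (s * (u * (u * (s * (u * (s * (g))))))))))))))) = u * (s * (u * (u * (s * (u * (u * (s * (g)))))))) := by rw [A2 (u * (s * (u * (s * (u * (u * (s * (u * (s * (g)))))))))), r4 (u * (u * (s * (u * (s * (g)))))), hu2 (s * (u * (s * (g)))), hs2 (u * (s * (g)))]
  have hB : u * (s * (u * (s * (u * (s * (u * (s * (u * (s * (u * (u * (s * (u * (s * (g))))))))))))))) = s * (u * (u * (s * (u * (u * (s * (u * (g)))))))) := by rw [r4 (g), r8 (u * (u * (s * (u * (s * (u * (g))))))), hu2 (s * (u * (s * (u * (g))))), hs2 (u * (s * (u * (g))))]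
  exact hA.symm.trans hB

lemma r10 (g : G7) : u * (u * (s * (u * (u * (s * (u * (s * (g)))))))) = s * (u * (s * (u * (u * (s * (u * (u * (g)))))))) := by
  have hA : u * (u * (s * (u * (u * (s * (u * (s * (u * (u * (u * (g))))))))))) = u * (u * (s * (u * (u * (s * (u * (s * (g)))))))) := by rw [hu2 (g)]
  have hB : u * (u * (s * (u * (u * (s * (u * (s * (u * (u * (u * (g))))))))))) = s * (u * (s * (u * (u * (s * (u * (u * (g)))))))) := by rw [r6 (u * (u * (g)))]
  exact hA.symm.trans hB

lemma T1 (g : G7) : u * (s * (u * (s * (u * (s * (s * (u * (u * (g))))))))) = u * (s * (u * (s * (g)))) := by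
  have hA : u * (s * (u * (s * (u * (s * (s * (u * (u * (g))))))))) = u * (s * (u * (s * (g)))) := by rw [A2 (s * (u * (u * (g)))), A2 (u * (u * (g))), hs2 (u * (s * (u * (s * (u * (u * (u * (g)))))))), hu2 (g)]
  have hB : u * (s * (u * (s * (g)))) = u * (s * (u * (s * (g)))) := rfl
  exact hA.trans hB.symm

lemma T2 (g : G7) : u * (s * (u * (s * (u * (s * (u * (u * (s * (g))))))))) = s * (u * (s * (u * (g)))) := by
  have hA : u * (s * (u * (s * (u * (s * (u * (u * (s * (g))))))))) = s * (u * (s * (u * (g)))) := by rw [A2 (u * (u * (s * (g)))), hu2 (s * (g)), hs2 (g)]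
  have hB : s * (u * (s * (u * (g)))) = s * (u * (s * (u * (g)))) := rfl
  exact hA.trans hB.symm

lemma T3 (g : G7) : u * (s * (u * (s * (u * (s * (u * (s * (u * (s * (u * (s * (u * (s * (u * (s * (u * (s * (u * (s * (u * (s * (u * (s * (g)))))))))))))))))))))))) = g := by
  have hA : u * (s * (u * (s * (u * (s * (u * (s * (u * (s * (u * (s * (u * (s * (u * (s * (u * (s * (u * (s * (u * (s * (u * (s * (g)))))))))))))))))))))))) = g := by rw [A2 (u * (s * (u * (s * (u * (s * (u * (s * (u * (s * (u * (s * (u * (s * (u * (s * (u * (s * (g))))))))))))))))))), r4 (u * (s * (u * (s * (u * (s * (u * (s * (u * (s * (u * (s * (u * (s * (g))))))))))))))), r7 (u * (s * (u * (s * (u * (s * (u * (s * (u * (s * (g))))))))))), A2 (u * (u * (s * (u * (s * (u * (u * (s * (u * (s * (u * (s * (u * (s * (u * (s * (g))))))))))))))))), hu2 (s * (u * (s * (u * (u * (s * (u * (s * (u * (s * (u * (s * (u * (s * (g))))))))))))))), hs2 (u * (s * (u * (u * (s * (u * (s * (u * (s * (u * (s * (u * (s * (g)))))))))))))), r9 (u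 * (s * (u * (s * (u * (s * (u * (s * (g))))))))), hs2 (u * (u * (s * (u * (u * (s * (u * (u * (s * (u * (s * (u * (s * (u * (s * (g)))))))))))))))), r9 (u * (s * (u * (s * (u * (s * (g))))))), r9 (u * (u * (s * (u * (s * (u * (s * (g)))))))), hu2 (s * (u * (s * (u * (s * (g)))))), hs2 (u * (s * (u * (s * (g))))), hu2 (s * (u * (s * (g)))), hs2 (u * (s * (g))), hu2 (s * (g)), hs2 (g)]
  have hB : g = g := rfl
  exact hA.trans hB.symm

lemma hz12 : (z:G7)^12 = 1 := by
  have e : (z:G7)^12 = z^3*(z^3*(z^3*(z^3*1))) := by group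
  rw [e, hcw, hcw, hcw, hcw]
  exact T3 1

lemma zmod (n : ℕ) : (z:G7)^n = z^(n % 12) := by
  conv_lhs => rw [← Nat.div_add_mod n 12]
  rw [pow_add, pow_mul, hz12, one_pow, one_mul]

lemma hu3 : (u:G7)^3 = 1 := by
  rw [pow_succ, pow_two, mul_assoc, hu]

lemma umod (n : ℕ) : (u:G7)^n = u^(n % 3) := by
  conv_lhs => rw [← Nat.div_add_mod n 3]
  rw [pow_add, pow_mul, hu3, one_pow, one_mul]

lemma hz3inv : ((z:G7)^3)⁻¹ = z^9 := by
  apply inv_eq_of_mul_eq_one_right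
  rw [← pow_add]; exact hz12

lemma k2step (g : G7) : s * (u * (u * g)) = z^9 * (u * (s * (u * (s * g)))) := by
  have h : z^3 * (s * (u * (u * g))) = u * (s * (u * (s * g))) := by
    rw [hcw]; exact T1 g
  have h2 : z^9 * (z^3 * (s * (u * (u * g)))) = s * (u * (u * g)) := by
    rw [← mul_assoc, ← pow_add, show (9+3 : ℕ) = 12 from rfl, hz12, one_mul]
  rw [← h]; exact h2.symm

lemma k3step (g : G7) : s * (u * (s * (u * g))) = z^3 * (u * (u * (s * g))) := by
  rw [hcw]; exact (T2 g).symm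

def X : Fin 4 → G7 := ![1, s, s*u, s*u*s]

def P (i j : ℕ) (k : Fin 4) : G7 := z^i * (u^j * X k)

lemma hzpow (n : ℕ) (a b : G7) : a * (z^n * b) = z^n * (a * b) := by
  have hcom : a * z^n = z^n * a := by
    induction n with
    | zero => simp
    | succ m ih =>
      rw [pow_succ, ← mul_assoc, ih, mul_assoc, hzc a, ← mul_assoc]
  rw [← mul_assoc, hcom, mul_assoc]

lemma nf_s (i j : ℕ) (k : Fin 4) : ∃ k', P i j k * s = P i j k' := by
  fin_cases k
  · exact ⟨1, by show z^i * (u^j * (1:G7)) * s = z^i * (u^j * s); group⟩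
  · refine ⟨0, ?_⟩
    show z^i * (u^j * s) * s = z^i * (u^j * 1)
    calc z^i * (u^j * s) * s = z^i * (u^j * (s * s)) := by group
    _ = z^i * (u^j * 1) := by rw [hs]
  · exact ⟨3, by show z^i * (u^j * (s*u)) * s = z^i * (u^j * (s*u*s)); group⟩
  · refine ⟨2, ?_⟩
    show z^i * (u^j * (s*u*s)) * s = z^i * (u^j * (s*u))
    calc z^i * (u^j * (s*u*s)) * s = z^i * (u^j * (s*(u*(s*s)))) := by group
    _ = z^i * (u^j * (s*(u*1))) := by rw [hs]
    _ = z^i * (u^j * (s*u)) := by rw [mul_one]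

lemma nf_u (i j : ℕ) (k : Fin 4) : ∃ i' j' k', P i j k * u = P i' j' k' := by
  fin_cases k
  · exact ⟨i, j+1, 0, by show z^i * (u^j * (1:G7)) * u = z^i * (u^(j+1) * 1); rw [pow_succ]; group⟩
  · exact ⟨i, j, 2, by show z^i * (u^j * s) * u = z^i * (u^j * (s*u)); group⟩
  · refine ⟨i+9, j+1, 3, ?_⟩
    show z^i * (u^j * (s*u)) * u = z^(i+9) * (u^(j+1) * (s*u*s))
    calc z^i * (u^j * (s*u)) * u = z^i * (u^j * (s * (u * (u * 1)))) := by group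
    _ = z^i * (u^j * (z^9 * (u * (s * (u * (s * 1)))))) := by rw [k2step]
    _ = z^i * (z^9 * (u^j * (u * (s * (u * (s * 1)))))) := by rw [hzpow]
    _ = z^(i+9) * (u^(j+1) * (s*u*s)) := by rw [← mul_assoc, ← pow_add, pow_succ]; group
  · refine ⟨i+3, j+2, 1, ?_⟩
    show z^i * (u^j * (s*u*s)) * u = z^(i+3) * (u^(j+2) * s)
    calc z^i * (u^j * (s*u*s)) * u = z^i * (u^j * (s * (u * (s * (u * 1))))) := by group
    _ = z^i * (u^j * (z^3 * (u * (u * (s * 1))))) := by rw [k3step]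
    _ = z^i * (z^3 * (u^j * (u * (u * (s * 1))))) := by rw [hzpow]
    _ = z^(i+3) * (u^(j+2) * s) := by
        rw [← mul_assoc, ← pow_add, pow_add _ j 2, pow_two]; group

lemma nf_t (i j : ℕ) (k : Fin 4) : ∃ i' j' k', P i j k * t = P i' j' k' := by
  obtain ⟨k1, h1⟩ := nf_s i j k
  obtain ⟨i2, j2, k2, h2⟩ := nf_u i j k1
  obtain ⟨i3, j3, k3, h3⟩ := nf_u i2 j2 k2
  refine ⟨i3+1, j3, k3, ?_⟩
  have : P i j k * t = z * (P i j k * s * u * u) := by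
    rw [htw]
    calc P i j k * (s * (z * (u * u))) = P i j k * s * (z * (u * u)) := by group
    _ = z * (P i j k * s * (u * u)) := by rw [hzc']
    _ = z * (P i j k * s * u * u) := by group
  rw [this, h1, h2, h3]
  show z * (z^i3 * (u^j3 * X k3)) = z^(i3+1) * (u^j3 * X k3)
  rw [pow_succ']; group

def Nf (g : G7) : Prop := ∃ (i j : ℕ) (k : Fin 4), g = P i j k

lemma nf_gen (g : G7) (h : Nf g) (x : Fin 3) : Nf (g * PresentedGroup.of x) := by
  obtain ⟨i, j, k, rfl⟩ := h
  fin_cases x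
  · obtain ⟨k', hk⟩ := nf_s i j k
    exact ⟨i, j, k', hk⟩
  · obtain ⟨i', j', k', hk⟩ := nf_t i j k
    exact ⟨i', j', k', hk⟩
  · obtain ⟨i', j', k', hk⟩ := nf_u i j k
    exact ⟨i', j', k', hk⟩

lemma sinv : (s:G7)⁻¹ = s := inv_eq_of_mul_eq_one_right hs
lemma tinv : (t:G7)⁻¹ = t * t := inv_eq_of_mul_eq_one_right ht
lemma uinv : (u:G7)⁻¹ = u * u := inv_eq_of_mul_eq_one_right hu

lemma nf_geninv (g : G7) (h : Nf g) (x : Fin 3) : Nf (g * (PresentedGroup.of x)⁻¹) := by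
  fin_cases x
  · show Nf (g * s⁻¹)
    rw [sinv]; exact nf_gen g h 0
  · show Nf (g * t⁻¹)
    rw [tinv, ← mul_assoc]; exact nf_gen _ (nf_gen g h 1) 1
  · show Nf (g * u⁻¹)
    rw [uinv, ← mul_assoc]; exact nf_gen _ (nf_gen g h 2) 2

lemma nf_mul (w : FreeGroup (Fin 3)) : ∀ g : G7, Nf g → Nf (g * PresentedGroup.mk rels w) := by
  induction w using FreeGroup.induction_on with
  | C1 => intro g h; rwa [map_one, mul_one]
  | of x => intro g h; exact nf_gen g h x
  | inv_of x _ => intro g h; rw [map_inv]; exact nf_geninv g h x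
  | mul a b ha hb => intro g h; rw [map_mul, ← mul_assoc]; exact hb _ (ha _ h)

lemma nf_one : Nf 1 := ⟨0, 0, 0, by simp [P, X]⟩

lemma nf_all (g : G7) : Nf g := by
  obtain ⟨w, rfl⟩ := PresentedGroup.mk_surjective rels g
  simpa using nf_mul w 1 nf_one

lemma nf_bounded (g : G7) : ∃ (i : Fin 12) (j : Fin 3) (k : Fin 4), g = P (i:ℕ) (j:ℕ) k := by
  obtain ⟨i, j, k, rfl⟩ := nf_all g
  refine ⟨⟨i % 12, Nat.mod_lt _ (by norm_num)⟩, ⟨j % 3, Nat.mod_lt _ (by norm_num)⟩, k, ?_⟩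
  show P i j k = P (i % 12) (j % 3) k
  rw [P, P, zmod, umod]

def f3 : Fin 3 → Multiplicative (ZMod 3) := ![1, Multiplicative.ofAdd 1, 1]

lemma hrel3 : ∀ r ∈ rels, FreeGroup.lift f3 r = 1 := by
  intro r hr
  simp only [rels, Set.mem_insert_iff, Set.mem_singleton_iff] at hr
  rcases hr with rfl | rfl | rfl | rfl | rfl <;>
    simp only [map_pow, map_mul, map_inv, FreeGroup.lift_apply_of, f3] <;> decide

def ψ : G7 →* Multiplicative (ZMod 3) := PresentedGroup.toGroup hrel3

lemma ψs : ψ s = 1 := PresentedGroup.toGroup.of hrel3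
lemma ψt : ψ t = Multiplicative.ofAdd 1 := PresentedGroup.toGroup.of hrel3
lemma ψu : ψ u = 1 := PresentedGroup.toGroup.of hrel3

lemma ψz : ψ z = Multiplicative.ofAdd 1 := by
  show ψ (s * t * u) = _
  rw [map_mul, map_mul, ψs, ψt, ψu, one_mul, mul_one]

lemma ψG6 : ∀ h ∈ G6, ψ h = 1 := by
  intro h hh
  have hle : G6 ≤ ψ.ker := by
    rw [G6, Subgroup.closure_le]
    rintro x (rfl | rfl)
    · exact ψs
    · exact ψu
  exact hle hh

lemma hsG6 : s ∈ G6 := Subgroup.subset_closure (by left; rfl)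
lemma huG6 : u ∈ G6 := Subgroup.subset_closure (by right; rfl)

lemma hz3G6 : (z:G7)^3 ∈ G6 := by
  have e : (z:G7)^3 = z * (z * z) := by rw [pow_succ, pow_two, mul_assoc]
  rw [e, hz3]
  exact Subgroup.mul_mem _ huG6 (Subgroup.mul_mem _ hsG6 (Subgroup.mul_mem _ huG6
    (Subgroup.mul_mem _ hsG6 (Subgroup.mul_mem _ huG6 hsG6))))

lemma XG6 (k : Fin 4) : X k ∈ G6 := by
  fin_cases k
  · exact Subgroup.one_mem _
  · exact hsG6
  · exact Subgroup.mul_mem _ hsG6 huG6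
  · exact Subgroup.mul_mem _ (Subgroup.mul_mem _ hsG6 huG6) hsG6

lemma cover (g : G7) : ∃ (a : ℕ) (h' : G7), a < 3 ∧ h' ∈ G6 ∧ g = z^a * h' := by
  obtain ⟨i, j, k, rfl⟩ := nf_bounded g
  refine ⟨(i:ℕ) % 3, (z^3)^((i:ℕ)/3) * (u^(j:ℕ) * X k), Nat.mod_lt _ (by norm_num), ?_, ?_⟩
  · exact Subgroup.mul_mem _ (Subgroup.pow_mem _ hz3G6 _)
      (Subgroup.mul_mem _ (Subgroup.pow_mem _ huG6 _) (XG6 k))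
  · show z^(i:ℕ) * (u^(j:ℕ) * X k) = _
    conv_rhs => rw [← pow_mul, ← mul_assoc, ← pow_add, Nat.mod_add_div]

lemma unionEq : (G6 : Set G7) ∪ z • (G6 : Set G7) ∪ z ^ 2 • (G6 : Set G7) = Set.univ := by
  ext g
  simp only [Set.mem_univ, iff_true, Set.mem_union]
  obtain ⟨a, h', ha, hmem, rfl⟩ := cover g
  interval_cases a
  · left; left; simpa using hmem
  · left; right
    exact ⟨h', hmem, by show z • h' = z^1 * h'; rw [smul_eq_mul, pow_one]⟩
  · right
    exact ⟨h', hmem, by show z^2 • h' = z^2 * h'; rw [smul_eq_mul]⟩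

lemma disj1 : Disjoint (G6 : Set G7) (z • (G6 : Set G7)) := by
  rw [Set.disjoint_left]
  rintro x hx ⟨y, hy, rfl⟩
  have h1 : ψ (z • y) = Multiplicative.ofAdd 1 := by
    rw [smul_eq_mul, map_mul, ψz, ψG6 y hy, mul_one]
  have h2 : ψ (z • y) = 1 := ψG6 _ hx
  rw [h1] at h2
  exact absurd h2 (by decide)

lemma disj2 : Disjoint (G6 : Set G7) (z ^ 2 • (G6 : Set G7)) := by
  rw [Set.disjoint_left]
  rintro x hx ⟨y, hy, rfl⟩
  have h1 : ψ (z^2 • y) = Multiplicative.ofAdd 2 := by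
    rw [smul_eq_mul, map_mul, map_pow, ψz, ψG6 y hy, mul_one]
    decide
  have h2 : ψ (z^2 • y) = 1 := ψG6 _ hx
  rw [h1] at h2
  exact absurd h2 (by decide)

lemma disj3 : Disjoint (z • (G6 : Set G7)) (z ^ 2 • (G6 : Set G7)) := by
  rw [Set.disjoint_left]
  rintro x ⟨y, hy, rfl⟩ ⟨y2, hy2, heq⟩
  have h1 : ψ (z • y) = Multiplicative.ofAdd 1 := by
    rw [smul_eq_mul, map_mul, ψz, ψG6 y hy, mul_one]
  have h2 : ψ (z^2 • y2) = Multiplicative.ofAdd 2 := by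
    rw [smul_eq_mul, map_mul, map_pow, ψz, ψG6 y2 hy2, mul_one]
    decide
  have heq' : z^2 • y2 = z • y := heq
  rw [heq', h1] at h2
  exact absurd h2 (by decide)

abbrev M13 := Matrix (Fin 2) (Fin 2) (ZMod 13)
def SM : M13 := !![3,1;5,10]
def TM : M13 := !![6,5;10,11]
def UM : M13 := !![1,0;0,3]
def ZM : M13 := !![2,0;0,2]
def XV : Fin 4 → M13 := ![1, SM, SM*UM, SM*UM*SM]
def VM : Fin 12 → Fin 3 → Fin 4 → M13 := fun i j k => ZM^(i:ℕ) * (UM^(j:ℕ) * XV k)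
def enc (m : M13) : ℕ := (m 0 0).val + 13*((m 0 1).val + 13*((m 1 0).val + 13*(m 1 1).val))

def Su : M13ˣ := ⟨SM, SM, by decide, by decide⟩
def Tu : M13ˣ := ⟨TM, !![8,7;1,2], by decide, by decide⟩
def Uu : M13ˣ := ⟨UM, !![1,0;0,9], by decide, by decide⟩

def f7 : Fin 3 → M13ˣ := ![Su, Tu, Uu]

lemma hrel7 : ∀ r ∈ rels, FreeGroup.lift f7 r = 1 := by
  intro r hr
  simp only [rels, Set.mem_insert_iff, Set.mem_singleton_iff] at hr
  rcases hr with rfl | rfl | rfl | rfl | rfl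
  · rw [map_pow, FreeGroup.lift_apply_of]
    rw [Units.ext_iff, Units.val_pow_eq_pow_val, pow_two]
    decide
  · rw [map_pow, FreeGroup.lift_apply_of]
    rw [Units.ext_iff, Units.val_pow_eq_pow_val, pow_succ, pow_two]
    decide
  · rw [map_pow, FreeGroup.lift_apply_of]
    rw [Units.ext_iff, Units.val_pow_eq_pow_val, pow_succ, pow_two]
    decide
  · rw [map_mul, map_inv, map_mul, map_mul, map_mul, map_mul, mul_inv_eq_one]
    simp only [FreeGroup.lift_apply_of]
    rw [Units.ext_iff]
    decide
  · rw [map_mul, map_inv, map_mul, map_mul, map_mul, map_mul, mul_inv_eq_one]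
    simp only [FreeGroup.lift_apply_of]
    rw [Units.ext_iff]
    decide

def φ : G7 →* M13ˣ := PresentedGroup.toGroup hrel7

lemma φs : φ s = Su := PresentedGroup.toGroup.of hrel7
lemma φt : φ t = Tu := PresentedGroup.toGroup.of hrel7
lemma φu : φ u = Uu := PresentedGroup.toGroup.of hrel7

lemma φP (i j : ℕ) (k : Fin 4) :
    (φ (P i j k)).val = ZM^i * (UM^j * (XV k)) := by
  have hz : (φ z).val = ZM := by
    show (φ (s*t*u)).val = ZM
    rw [map_mul, map_mul, φs, φt, φu]
    rw [Units.val_mul, Units.val_mul]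
    decide
  have hX : (φ (X k)).val = XV k := by
    fin_cases k
    · show (φ 1).val = (1:M13)
      rw [map_one, Units.val_one]
    · show (φ s).val = SM
      rw [φs]; rfl
    · show (φ (s*u)).val = SM * UM
      rw [map_mul, Units.val_mul, φs, φu]; rfl
    · show (φ (s*u*s)).val = SM * UM * SM
      rw [map_mul, map_mul, Units.val_mul, Units.val_mul, φs, φu]; rfl
  rw [P, map_mul, map_mul, map_pow, map_pow, Units.val_mul, Units.val_mul,
    Units.val_pow_eq_pow_val, Units.val_pow_eq_pow_val, hz, hX, φu]
  rfl
def tabn : Fin 12 → Fin 3 → Fin 4 → ℕ :=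
  ![![![2198, 22831, 9675, 14805], ![6592, 9142, 26744, 11256], ![19774, 27394, 23026, 5003]],
    ![![4396, 17101, 19350, 27231], ![13184, 18284, 24927, 22330], ![10987, 26227, 17491, 9824]],
    ![![8792, 3444, 7942, 25888], ![26368, 8007, 21293, 16086], ![21974, 21696, 4224, 19635]],
    ![![17584, 4678, 13505, 21018], ![24175, 13804, 11646, 3611], ![15387, 12621, 6069, 8512]],
    ![![6594, 9174, 26828, 11265], ![19776, 27426, 23110, 5012], ![2200, 22863, 9759, 14814]],
    ![![13188, 18335, 24913, 22348], ![10991, 26278, 17477, 9842], ![4400, 17152, 19336, 27249]],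
    ![![26376, 8109, 21265, 16135], ![21982, 21798, 4196, 19684], ![8800, 3546, 7914, 25937]],
    ![![24178, 13839, 11590, 3709], ![15390, 12656, 6013, 8610], ![17587, 4713, 13449, 21116]],
    ![![19782, 27496, 22998, 5052], ![2206, 22933, 9647, 14854], ![6600, 9244, 26716, 11305]],
    ![![10990, 26262, 17435, 9922], ![4399, 17136, 19294, 27329], ![13187, 18319, 24871, 22428]],
    ![![21980, 21766, 4112, 19675], ![8798, 3514, 7830, 25928], ![26374, 8077, 21181, 16126]],
    ![![15386, 12605, 6027, 8592], ![17583, 4662, 13463, 21098], ![24174, 13788, 11604, 3691]]]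

set_option maxRecDepth 40000 in
lemma valsn : ∀ (i : Fin 12) (j : Fin 3) (k : Fin 4), enc (VM i j k) = tabn i j k := by decide

set_option maxRecDepth 40000 in
lemma injn : ∀ (i i' : Fin 12) (j j' : Fin 3) (k k' : Fin 4),
    tabn i j k = tabn i' j' k' → i = i' ∧ j = j' ∧ k = k' := by decide

lemma Pinj {i i' : Fin 12} {j j' : Fin 3} {k k' : Fin 4}
    (h : P (i:ℕ) (j:ℕ) k = P (i':ℕ) (j':ℕ) k') : i = i' ∧ j = j' ∧ k = k' := by
  have hv : VM i j k = VM i' j' k' := by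
    have h2 : (φ (P (i:ℕ) (j:ℕ) k)).val = (φ (P (i':ℕ) (j':ℕ) k')).val := by rw [h]
    rw [φP, φP] at h2
    exact h2
  have h3 := congrArg enc hv
  rw [valsn, valsn] at h3
  exact injn i i' j j' k k' h3

abbrev ZS : Set G7 := {1, z, z ^ 2, z ^ 3, z ^ 4, z ^ 5, z ^ 6, z ^ 7, z ^ 8, z ^ 9, z ^ 10, z ^ 11}
abbrev US : Set G7 := {1, u, u ^ 2}
abbrev XS : Set G7 := {1, s, s * u, s * u * s}

lemma memZ (i : Fin 12) : z^(i:ℕ) ∈ ZS := by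
  fin_cases i
  · exact (Set.mem_insert_iff.mpr (Or.inl (by show z^(0:ℕ) = (1:G7); rw [pow_zero])))
  · exact (Set.mem_insert_iff.mpr (Or.inr (Set.mem_insert_iff.mpr (Or.inl (by show z^(1:ℕ) = z; rw [pow_one])))))
  · exact (Set.mem_insert_iff.mpr (Or.inr (Set.mem_insert_iff.mpr (Or.inr (Set.mem_insert_iff.mpr (Or.inl rfl))))))
  · exact (Set.mem_insert_iff.mpr (Or.inr (Set.mem_insert_iff.mpr (Or.inr (Set.mem_insert_iff.mpr (Or.inr (Set.mem_insert_iff.mpr (Or.inl rfl))))))))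
  · exact (Set.mem_insert_iff.mpr (Or.inr (Set.mem_insert_iff.mpr (Or.inr (Set.mem_insert_iff.mpr (Or.inr (Set.mem_insert_iff.mpr (Or.inr (Set.mem_insert_iff.mpr (Or.inl rfl))))))))))
  · exact (Set.mem_insert_iff.mpr (Or.inr (Set.mem_insert_iff.mpr (Or.inr (Set.mem_insert_iff.mpr (Or.inr (Set.mem_insert_iff.mpr (Or.inr (Set.mem_insert_iff.mpr (Or.inr (Set.mem_insert_iff.mpr (Or.inl rfl))))))))))))
  · exact (Set.mem_insert_iff.mpr (Or.inr (Set.mem_insert_iff.mpr (Or.inr (Set.mem_insert_iff.mpr (Or.inr (Set.mem_insert_iff.mpr (Or.inr (Set.mem_insert_iff.mpr (Or.inr (Set.mem_insert_iff.mpr (Or.inr (Set.mem_insert_iff.mpr (Or.inl rfl))))))))))))))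
  · exact (Set.mem_insert_iff.mpr (Or.inr (Set.mem_insert_iff.mpr (Or.inr (Set.mem_insert_iff.mpr (Or.inr (Set.mem_insert_iff.mpr (Or.inr (Set.mem_insert_iff.mpr (Or.inr (Set.mem_insert_iff.mpr (Or.inr (Set.mem_insert_iff.mpr (Or.inr (Set.mem_insert_iff.mpr (Or.inl rfl))))))))))))))))
  · exact (Set.mem_insert_iff.mpr (Or.inr (Set.mem_insert_iff.mpr (Or.inr (Set.mem_insert_iff.mpr (Or.inr (Set.mem_insert_iff.mpr (Or.inr (Set.mem_insert_iff.mpr (Or.inr (Set.mem_insert_iff.mpr (Or.inr (Set.mem_insert_iff.mpr (Or.inr (Set.mem_insert_iff.mpr (Or.inr (Set.mem_insert_iff.mpr (Or.inl rfl))))))))))))))))))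
  · exact (Set.mem_insert_iff.mpr (Or.inr (Set.mem_insert_iff.mpr (Or.inr (Set.mem_insert_iff.mpr (Or.inr (Set.mem_insert_iff.mpr (Or.inr (Set.mem_insert_iff.mpr (Or.inr (Set.mem_insert_iff.mpr (Or.inr (Set.mem_insert_iff.mpr (Or.inr (Set.mem_insert_iff.mpr (Or.inr (Set.mem_insert_iff.mpr (Or.inr (Set.mem_insert_iff.mpr (Or.inl rfl))))))))))))))))))))
  · exact (Set.mem_insert_iff.mpr (Or.inr (Set.mem_insert_iff.mpr (Or.inr (Set.mem_insert_iff.mpr (Or.inr (Set.mem_insert_iff.mpr (Or.inr (Set.mem_insert_iff.mpr (Or.inr (Set.mem_insert_iff.mpr (Or.inr (Set.mem_insert_iff.mpr (Or.inr (Set.mem_insert_iff.mpr (Or.inr (Set.mem_insert_iff.mpr (Or.inr (Set.mem_insert_iff.mpr (Or.inr (Set.mem_insert_iff.mpr (Or.inl rfl))))))))))))))))))))))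
  · exact (Set.mem_insert_iff.mpr (Or.inr (Set.mem_insert_iff.mpr (Or.inr (Set.mem_insert_iff.mpr (Or.inr (Set.mem_insert_iff.mpr (Or.inr (Set.mem_insert_iff.mpr (Or.inr (Set.mem_insert_iff.mpr (Or.inr (Set.mem_insert_iff.mpr (Or.inr (Set.mem_insert_iff.mpr (Or.inr (Set.mem_insert_iff.mpr (Or.inr (Set.mem_insert_iff.mpr (Or.inr (Set.mem_insert_iff.mpr (Or.inr (Set.mem_singleton_iff.mpr rfl)))))))))))))))))))))))

lemma memU (j : Fin 3) : u^(j:ℕ) ∈ US := by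
  fin_cases j
  · exact (Set.mem_insert_iff.mpr (Or.inl (by show u^(0:ℕ) = (1:G7); rw [pow_zero])))
  · exact (Set.mem_insert_iff.mpr (Or.inr (Set.mem_insert_iff.mpr (Or.inl (by show u^(1:ℕ) = u; rw [pow_one])))))
  · exact (Set.mem_insert_iff.mpr (Or.inr (Set.mem_insert_iff.mpr (Or.inr (Set.mem_singleton_iff.mpr rfl)))))

lemma memX (k : Fin 4) : X k ∈ XS := by
  fin_cases k
  · exact (Set.mem_insert_iff.mpr (Or.inl rfl))
  · exact (Set.mem_insert_iff.mpr (Or.inr (Set.mem_insert_iff.mpr (Or.inl rfl))))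
  · exact (Set.mem_insert_iff.mpr (Or.inr (Set.mem_insert_iff.mpr (Or.inr (Set.mem_insert_iff.mpr (Or.inl rfl))))))
  · exact (Set.mem_insert_iff.mpr (Or.inr (Set.mem_insert_iff.mpr (Or.inr (Set.mem_insert_iff.mpr (Or.inr (Set.mem_singleton_iff.mpr rfl)))))))

lemma memZ' {y : G7} (hy : y ∈ ZS) : ∃ i : Fin 12, y = z^(i:ℕ) := by
  rcases hy with rfl|rfl|rfl|rfl|rfl|rfl|rfl|rfl|rfl|rfl|rfl|rfl
  · exact ⟨0, by rw [show ((0:Fin 12):ℕ) = 0 from rfl, pow_zero]⟩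
  · exact ⟨1, by rw [show ((1:Fin 12):ℕ) = 1 from rfl, pow_one]⟩
  · exact ⟨2, rfl⟩
  · exact ⟨3, rfl⟩
  · exact ⟨4, rfl⟩
  · exact ⟨5, rfl⟩
  · exact ⟨6, rfl⟩
  · exact ⟨7, rfl⟩
  · exact ⟨8, rfl⟩
  · exact ⟨9, rfl⟩
  · exact ⟨10, rfl⟩
  · exact ⟨11, rfl⟩

lemma memU' {v : G7} (hv : v ∈ US) : ∃ j : Fin 3, v = u^(j:ℕ) := by
  rcases hv with rfl|rfl|rfl
  · exact ⟨0, by rw [show ((0:Fin 3):ℕ) = 0 from rfl, pow_zero]⟩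
  · exact ⟨1, by rw [show ((1:Fin 3):ℕ) = 1 from rfl, pow_one]⟩
  · exact ⟨2, rfl⟩

lemma memX' {x : G7} (hx : x ∈ XS) : ∃ k : Fin 4, x = X k := by
  rcases hx with rfl|rfl|rfl|rfl
  · exact ⟨0, rfl⟩
  · exact ⟨1, rfl⟩
  · exact ⟨2, rfl⟩
  · exact ⟨3, rfl⟩

theorem statement3' :
    ((G6 : Set G7) ∪ z • (G6 : Set G7) ∪ z ^ 2 • (G6 : Set G7) = Set.univ) ∧
    Disjoint (G6 : Set G7) (z • (G6 : Set G7)) ∧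
    Disjoint (G6 : Set G7) (z ^ 2 • (G6 : Set G7)) ∧
    Disjoint (z • (G6 : Set G7)) (z ^ 2 • (G6 : Set G7)) ∧
    Set.BijOn (fun p : G7 × G7 × G7 => p.1 * p.2.1 * p.2.2)
      (ZS ×ˢ (US ×ˢ XS)) (Set.univ : Set G7) := by
  refine ⟨unionEq, disj1, disj2, disj3, fun p _ => Set.mem_univ _, ?_, ?_⟩
  · rintro ⟨y, v, x⟩ hp ⟨y', v', x'⟩ hq heq
    obtain ⟨hy, hv, hx⟩ := hp
    obtain ⟨hy', hv', hx'⟩ := hq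
    obtain ⟨i, rfl⟩ := memZ' hy
    obtain ⟨j, rfl⟩ := memU' hv
    obtain ⟨k, rfl⟩ := memX' hx
    obtain ⟨i', rfl⟩ := memZ' hy'
    obtain ⟨j', rfl⟩ := memU' hv'
    obtain ⟨k', rfl⟩ := memX' hx'
    have hP : P (i:ℕ) (j:ℕ) k = P (i':ℕ) (j':ℕ) k' := by
      rw [P, P, ← mul_assoc, ← mul_assoc]
      exact heq
    obtain ⟨e1, e2, e3⟩ := Pinj hP
    rw [e1, e2, e3]
  · intro g _
    obtain ⟨i, j, k, rfl⟩ := nf_bounded g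
    refine ⟨(z^(i:ℕ), u^(j:ℕ), X k), ⟨memZ i, memU j, memX k⟩, ?_⟩
    show z^(i:ℕ) * u^(j:ℕ) * X k = P (i:ℕ) (j:ℕ) k
    rw [P, mul_assoc]

theorem statement3 :
    ((G6 : Set G7) ∪ z • (G6 : Set G7) ∪ z ^ 2 • (G6 : Set G7) = Set.univ) ∧
    Disjoint (G6 : Set G7) (z • (G6 : Set G7)) ∧
    Disjoint (G6 : Set G7) (z ^ 2 • (G6 : Set G7)) ∧
    Disjoint (z • (G6 : Set G7)) (z ^ 2 • (G6 : Set G7)) ∧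
    Set.BijOn (fun p : G7 × G7 × G7 => p.1 * p.2.1 * p.2.2)
      (({1, z, z ^ 2, z ^ 3, z ^ 4, z ^ 5, z ^ 6, z ^ 7, z ^ 8, z ^ 9, z ^ 10, z ^ 11} : Set G7) ×ˢ (({1, u, u ^ 2} : Set G7) ×ˢ ({1, s, s * u, s * u * s} : Set G7)))
      (Set.univ : Set G7) := by
  exact statement3'

end Tetra
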